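/- For the bilinear game f(x,y)=⟨x,y⟩ with subspace directions P = y_k, Q = x_k and subspace-optimal coefficients, the change in ‖x‖² after one step with step size η equals (‖Q‖²/⟨Q,P⟩²)·(-2η⟨Q,P⟩² + η²‖P‖²‖Q‖²); this quantity is strictly negative if and only if 0 < η < 2⟨x_k,y_k⟩²/(‖x_k‖²‖y_k‖²). -/
import Mathlib

open Matrix Finset

theorem subspace_bilinear_step_identity (M : ℕ) (x y : Fin M → ℝ)
    (hf : x ⬝ᵥ y ≠ 0)
    (P Q : Fin M → ℝ) (hP : P = y) (hQ : Q = x)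
    (α : ℝ) (hα : α = -(Q ⬝ᵥ x) / (Q ⬝ᵥ P))
    (η : ℝ)
    (x' : Fin M → ℝ) (hx' : x' = x + (η * α) • P) :
    (∑ i, x' i ^ 2) - (∑ i, x i ^ 2) =
      ((∑ i, Q i ^ 2) / (Q ⬝ᵥ P) ^ 2) *
        (-2 * η * (Q ⬝ᵥ P) ^ 2 + η ^ 2 * (∑ i, P i ^ 2) * ∑ i, Q i ^ 2) ∧
    ((∑ i, x' i ^ 2) - (∑ i, x i ^ 2) < 0 ↔
      (0 < η ∧ η < 2 * (x ⬝ᵥ y) ^ 2 / ((∑ i, x i ^ 2) * ∑ i, y i ^ 2))) := by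
  subst hP hQ hx'
  set a : ℝ := ∑ i, Q i ^ 2 with ha
  set b : ℝ := ∑ i, P i ^ 2 with hb
  set c : ℝ := Q ⬝ᵥ P with hc
  have hQx : Q ⬝ᵥ Q = a := by simp [dotProduct, ha, sq]
  rw [hQx] at hα
  subst hα
  have hsum : ∑ i, (Q + (η * (-a / c)) • P) i ^ 2
      = a + 2 * (η * (-a / c)) * c + (η * (-a / c)) ^ 2 * b := by
    rw [ha, hb, hc, dotProduct, Finset.mul_sum, Finset.mul_sum, ← Finset.sum_add_distrib,
      ← Finset.sum_add_distrib]
    apply Finset.sum_congr rfl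
    intro i _
    simp only [Pi.add_apply, Pi.smul_apply, smul_eq_mul]
    ring
  have hxne : Q ≠ 0 := by
    intro h; exact hf (by rw [hc, h]; simp)
  have hyne : P ≠ 0 := by
    intro h; exact hf (by rw [hc, h]; simp)
  have hapos : 0 < a := by
    rcases Function.ne_iff.mp hxne with ⟨i, hi⟩
    simp only [Pi.zero_apply] at hi
    have h1 : 0 < Q i ^ 2 := by positivity
    exact Finset.sum_pos' (fun j _ => sq_nonneg _) ⟨i, Finset.mem_univ i, h1⟩
  have hbpos : 0 < b := by
    rcases Function.ne_iff.mp hyne with ⟨i, hi⟩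
    simp only [Pi.zero_apply] at hi
    have h1 : 0 < P i ^ 2 := by positivity
    exact Finset.sum_pos' (fun j _ => sq_nonneg _) ⟨i, Finset.mem_univ i, h1⟩
  have hc2 : (0:ℝ) < c ^ 2 := by positivity
  have hident : (∑ i, (Q + (η * (-a / c)) • P) i ^ 2) - a
      = (a / c ^ 2) * (-2 * η * c ^ 2 + η ^ 2 * b * a) := by
    rw [hsum]
    field_simp
    ring
  refine ⟨hident, ?_⟩
  rw [hident]
  constructor
  · intro h
    have h' : -2 * η * c ^ 2 + η ^ 2 * b * a < 0 := by
      by_contra h''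
      push_neg at h''
      nlinarith [mul_nonneg (le_of_lt (div_pos hapos hc2)) h'']
    have hη : 0 < η := by
      by_contra hle; push_neg at hle
      have h1 : 0 ≤ -η * c ^ 2 := mul_nonneg (neg_nonneg.2 hle) hc2.le
      have h2 : 0 ≤ η ^ 2 * b * a := by positivity
      linarith
    refine ⟨hη, ?_⟩
    rw [lt_div_iff₀ (by positivity)]
    nlinarith
  · rintro ⟨hη, hη2⟩
    rw [lt_div_iff₀ (by positivity)] at hη2
    have h3 : -2 * η * c ^ 2 + η ^ 2 * b * a < 0 := by nlinarith
    have := mul_neg_of_pos_of_neg (div_pos hapos hc2) h3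
    linarith
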